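/- arXiv:1103.0991 — 2 statements merged into one kernel-verified Lean document; each statement's English description precedes it below -/
import Mathlib

section
/- (Multi-operator demiclosedness principle for nonexpansive operators.) Let X be a real Hilbert space, let m ≥ 2 be an integer, let I = {1, …, m}, and let (T_i)_{i∈I} be a family of nonexpansive operators on X. For each i ∈ I let (z_{i,n})_{n∈ℕ} be a sequence in X such that, for all i, j ∈ I: z_{i,n} ⇀ z_i and T_i z_{i,n} ⇀ y_i; the sum over i ∈ I of (z_{i,n} − T_i z_{i,n}) converges in norm to ∑_{i∈I} (z_i − y_i); and z_{i,n} − z_{j,n} + T_i z_{i,n} − T_j z_{j,n} → 0 in norm. Then T_i z_i = y_i for every i ∈ I. -/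
open Filter Topology RealInnerProductSpace

private lemma bdd_of_weak' {X : Type*} [NormedAddCommGroup X] [InnerProductSpace ℝ X]
    [CompleteSpace X] (f : ℕ → X) (l : X)
    (h : ∀ w : X, Tendsto (fun n => ⟪f n, w⟫) atTop (𝓝 ⟪l, w⟫)) :
    ∃ C, ∀ n, ‖f n‖ ≤ C := by
  have hb : ∀ x : X, ∃ C, ∀ n, ‖(innerSL ℝ (f n)) x‖ ≤ C := by
    intro x
    have := (h x).norm.bddAbove_range
    obtain ⟨C, hC⟩ := this
    exact ⟨C, fun n => hC ⟨n, rfl⟩⟩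
  obtain ⟨C, hC⟩ := banach_steinhaus hb
  exact ⟨C, fun n => by simpa [innerSL_apply_norm] using hC n⟩

private lemma inner_zero_of_strong_bdd {X : Type*} [NormedAddCommGroup X]
    [InnerProductSpace ℝ X] (f g : ℕ → X) (C : ℝ)
    (hf : Tendsto f atTop (𝓝 0)) (hg : ∀ n, ‖g n‖ ≤ C) :
    Tendsto (fun n => ⟪f n, g n⟫) atTop (𝓝 (0 : ℝ)) := by
  have hC : 0 ≤ C := le_trans (norm_nonneg _) (hg 0)
  refine squeeze_zero_norm (f := fun n => (⟪f n, g n⟫ : ℝ)) (a := fun n => ‖f n‖ * C) (fun n => ?_) ?_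
  · calc ‖⟪f n, g n⟫‖ ≤ ‖f n‖ * ‖g n‖ := norm_inner_le_norm _ _
      _ ≤ ‖f n‖ * C := mul_le_mul_of_nonneg_left (hg n) (norm_nonneg _)
  · simpa using (hf.norm).mul_const C

private lemma inner_weak_strong {X : Type*} [NormedAddCommGroup X]
    [InnerProductSpace ℝ X] (f g : ℕ → X) (a b : X) (C : ℝ)
    (hC : ∀ n, ‖f n‖ ≤ C)
    (hf : ∀ w : X, Tendsto (fun n => ⟪f n, w⟫) atTop (𝓝 ⟪a, w⟫))
    (hg : Tendsto g atTop (𝓝 b)) :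
    Tendsto (fun n => ⟪f n, g n⟫) atTop (𝓝 ⟪a, b⟫) := by
  have h1 : Tendsto (fun n => ⟪g n - b, f n⟫) atTop (𝓝 (0 : ℝ)) :=
    inner_zero_of_strong_bdd _ _ C (by simpa using hg.sub (tendsto_const_nhds (x := b))) hC
  have heq : (fun n => ⟪f n, g n⟫) = fun n => ⟪g n - b, f n⟫ + ⟪f n, b⟫ := by
    funext n
    rw [← real_inner_comm (g n - b) (f n), inner_sub_right]
    ring
  rw [heq]
  simpa using h1.add (hf b)

theorem multi_operator_demiclosedness_nonexpansive
    {X : Type*} [NormedAddCommGroup X] [InnerProductSpace ℝ X] [CompleteSpace X]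
    (m : ℕ) (hm : 2 ≤ m)
    (T : Fin m → X → X)
    (hT : ∀ i, ∀ a b : X, ‖T i a - T i b‖ ≤ ‖a - b‖)
    (zn : Fin m → ℕ → X) (z y : Fin m → X)
    (hzweak : ∀ i, ∀ w : X, Tendsto (fun n => ⟪zn i n, w⟫) atTop (𝓝 ⟪z i, w⟫))
    (hTweak : ∀ i, ∀ w : X, Tendsto (fun n => ⟪T i (zn i n), w⟫) atTop (𝓝 ⟪y i, w⟫))
    (hsum : Tendsto (fun n => ∑ i, (zn i n - T i (zn i n))) atTop
      (𝓝 (∑ i, (z i - y i))))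
    (hdiff : ∀ i j, Tendsto
      (fun n => zn i n - zn j n + T i (zn i n) - T j (zn j n)) atTop (𝓝 0)) :
    ∀ i, T i (z i) = y i := by
  -- notation
  set A : Fin m → ℕ → X := fun i n => zn i n + T i (zn i n) with hA
  set U : Fin m → ℕ → X := fun i n => zn i n - T i (zn i n) with hU
  set w : Fin m → X := fun i => z i + y i with hwdef
  set u : Fin m → X := fun i => z i - y i with hudef
  set s : Fin m → X := fun i => z i + T i (z i) with hsdef
  set d : Fin m → X := fun i => z i - T i (z i) with hddef
  have i0 : Fin m := ⟨0, by omega⟩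
  -- weak convergences
  have hAweak : ∀ i, ∀ e : X, Tendsto (fun n => ⟪A i n, e⟫) atTop (𝓝 ⟪w i, e⟫) := by
    intro i e
    simpa [hA, hwdef, inner_add_left] using (hzweak i e).add (hTweak i e)
  have hUweak : ∀ i, ∀ e : X, Tendsto (fun n => ⟪U i n, e⟫) atTop (𝓝 ⟪u i, e⟫) := by
    intro i e
    simpa [hU, hudef, inner_sub_left] using (hzweak i e).sub (hTweak i e)
  have hAdiff : ∀ i j, Tendsto (fun n => A i n - A j n) atTop (𝓝 0) := by
    intro i j
    have heq : ∀ n, zn i n - zn j n + T i (zn i n) - T j (zn j n) = A i n - A j n := by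
      intro n; simp only [hA]; abel
    exact (hdiff i j).congr heq
  -- all w i coincide
  have hw : ∀ i j, w i = w j := by
    intro i j
    have h1 : Tendsto (fun n => ⟪A i n - A j n, w i - w j⟫) atTop
        (𝓝 ⟪w i - w j, w i - w j⟫) := by
      simpa only [inner_sub_left] using (hAweak i (w i - w j)).sub (hAweak j (w i - w j))
    have h2 : Tendsto (fun n => ⟪A i n - A j n, w i - w j⟫) atTop (𝓝 (0 : ℝ)) := by
      simpa using (hAdiff i j).inner (tendsto_const_nhds (x := w i - w j))
    have h3 : ⟪w i - w j, w i - w j⟫ = 0 := tendsto_nhds_unique h1 h2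
    have h4 : w i - w j = 0 := by
      exact inner_self_eq_zero.mp h3
    exact sub_eq_zero.mp h4
  -- bounds
  have hbU : ∀ i, ∃ C, ∀ n, ‖U i n‖ ≤ C := fun i => bdd_of_weak' _ _ (hUweak i)
  choose CU hCU using hbU
  obtain ⟨CA, hCA⟩ : ∃ C, ∀ n, ‖A i0 n‖ ≤ C := bdd_of_weak' _ _ (hAweak i0)
  -- nonnegativity of the key inner products
  have hP : ∀ i n, (0 : ℝ) ≤ ⟪A i n - s i, U i n - d i⟫ := by
    intro i n
    have expand : ∀ x v : X, ⟪x + v, x - v⟫ = ‖x‖ ^ 2 - ‖v‖ ^ 2 := by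
      intro x v
      rw [inner_sub_right, inner_add_left, inner_add_left, real_inner_comm v x,
        real_inner_self_eq_norm_sq, real_inner_self_eq_norm_sq]
      ring
    have e1 : A i n - s i = (zn i n - z i) + (T i (zn i n) - T i (z i)) := by
      simp only [hA, hsdef]; abel
    have e2 : U i n - d i = (zn i n - z i) - (T i (zn i n) - T i (z i)) := by
      simp only [hU, hddef]; abel
    rw [e1, e2, expand]
    have := hT i (zn i n) (z i)
    have hsq : ‖T i (zn i n) - T i (z i)‖ ^ 2 ≤ ‖zn i n - z i‖ ^ 2 :=
      pow_le_pow_left₀ (norm_nonneg _) this 2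
    linarith
  -- limit of the sum of key inner products
  have hPsum : Tendsto (fun n => ∑ i, ⟪A i n - s i, U i n - d i⟫) atTop
      (𝓝 (∑ i, ⟪w i0 - s i, u i - d i⟫)) := by
    have heq : (fun n => ∑ i, ⟪A i n - s i, U i n - d i⟫) =
        fun n => (∑ i, ⟪A i n - A i0 n, U i n⟫) + ⟪A i0 n, ∑ i, U i n⟫
          - ∑ i, ⟪A i n, d i⟫ - ∑ i, ⟪U i n, s i⟫ + ∑ i, ⟪s i, d i⟫ := by
      funext n
      rw [inner_sum]
      rw [← Finset.sum_add_distrib, ← Finset.sum_sub_distrib, ← Finset.sum_sub_distrib,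
        ← Finset.sum_add_distrib]
      apply Finset.sum_congr rfl
      intro i _
      simp only [inner_sub_left, inner_sub_right, real_inner_comm (U i n) (s i)]
      ring
    rw [heq]
    have T1 : Tendsto (fun n => ∑ i, ⟪A i n - A i0 n, U i n⟫) atTop (𝓝 0) := by
      have : Tendsto (fun n => ∑ i, ⟪A i n - A i0 n, U i n⟫) atTop
          (𝓝 (∑ i : Fin m, (0 : ℝ))) := by
        apply tendsto_finset_sum
        intro i _
        exact inner_zero_of_strong_bdd _ _ (CU i) (hAdiff i i0) (hCU i)
      simpa using this
    have T2 : Tendsto (fun n => ⟪A i0 n, ∑ i, U i n⟫) atTop (𝓝 ⟪w i0, ∑ i, u i⟫) :=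
      inner_weak_strong _ _ _ _ CA hCA (hAweak i0) hsum
    have T3 : Tendsto (fun n => ∑ i, ⟪A i n, d i⟫) atTop (𝓝 (∑ i, ⟪w i, d i⟫)) :=
      tendsto_finset_sum _ fun i _ => hAweak i (d i)
    have T4 : Tendsto (fun n => ∑ i, ⟪U i n, s i⟫) atTop (𝓝 (∑ i, ⟪u i, s i⟫)) :=
      tendsto_finset_sum _ fun i _ => hUweak i (s i)
    have := ((((T1.add T2).sub T3).sub T4).add
      (tendsto_const_nhds (x := ∑ i, (⟪s i, d i⟫ : ℝ))))
    convert this using 2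
    rw [inner_sum, zero_add, ← Finset.sum_sub_distrib, ← Finset.sum_sub_distrib,
      ← Finset.sum_add_distrib]
    apply Finset.sum_congr rfl
    intro i _
    rw [hw i i0]
    simp only [inner_sub_left, inner_sub_right, real_inner_comm (u i) (s i)]
    ring
  -- the limit is nonpositive sum of squares, but also nonnegative
  have hL : (0 : ℝ) ≤ ∑ i, ⟪w i0 - s i, u i - d i⟫ :=
    ge_of_tendsto' hPsum fun n => Finset.sum_nonneg fun i _ => hP i n
  have hterm : ∀ i : Fin m, ⟪w i0 - s i, u i - d i⟫ = -‖T i (z i) - y i‖ ^ 2 := by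
    intro i
    have e1 : w i0 - s i = -(T i (z i) - y i) := by
      rw [← hw i i0]; simp only [hwdef, hsdef]; abel
    have e2 : u i - d i = T i (z i) - y i := by
      simp only [hudef, hddef]; abel
    rw [e1, e2, inner_neg_left, real_inner_self_eq_norm_sq]
  have hsum0 : ∑ i, ‖T i (z i) - y i‖ ^ 2 ≤ 0 := by
    have : ∑ i, ⟪w i0 - s i, u i - d i⟫ = -∑ i, ‖T i (z i) - y i‖ ^ 2 := by
      rw [← Finset.sum_neg_distrib]
      exact Finset.sum_congr rfl fun i _ => hterm i
    linarith [hL, this ▸ hL]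
  intro i
  have hi : ‖T i (z i) - y i‖ ^ 2 = 0 := by
    have h1 : ∀ j ∈ Finset.univ, (0:ℝ) ≤ ‖T j (z j) - y j‖ ^ 2 :=
      fun j _ => sq_nonneg _
    have h2 : ∑ j, ‖T j (z j) - y j‖ ^ 2 = 0 :=
      le_antisymm hsum0 (Finset.sum_nonneg h1)
    exact (Finset.sum_eq_zero_iff_of_nonneg h1).mp h2 i (Finset.mem_univ i)
  have : T i (z i) - y i = 0 := by
    have := pow_eq_zero_iff (n := 2) (by norm_num) |>.mp hi
    exact norm_eq_zero.mp this
  exact sub_eq_zero.mp this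
end

section
/- (Failure of the fully weak demiclosedness principle.) Let X = ℓ²(ℕ), let C = {x ∈ X : ‖x‖ ≤ 1}, let (e_n)_{n∈ℕ} be the standard unit vectors, set z_n = e_0 + e_n for each n ∈ ℕ, and set T = Id − P_C. Then T is firmly nonexpansive, z_n ⇀ e_0, and z_n − T z_n = P_C z_n ⇀ (1/√2) e_0, yet e_0 − T e_0 = P_C e_0 = e_0 ≠ (1/√2) e_0. Hence the implication (z_n ⇀ z and z_n − T z_n ⇀ x ⟹ z − T z = x) fails for firmly nonexpansive T. -/
open Filter Topology RealInnerProductSpace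

/-- The real Hilbert space `ℓ²(ℕ)`. -/
noncomputable abbrev ellTwo : Type := lp (fun _ : ℕ => ℝ) 2

/-- The standard unit vectors of `ℓ²(ℕ)`. -/
noncomputable def stdVec (n : ℕ) : ellTwo := lp.single 2 n (1 : ℝ)

/-- The metric projection onto the closed unit ball of `ℓ²(ℕ)`. -/
noncomputable def ballProj (x : ellTwo) : ellTwo :=
  if ‖x‖ ≤ 1 then x else ‖x‖⁻¹ • x

/-- Firm nonexpansiveness of an operator on `ℓ²(ℕ)`. -/
def FirmlyNonexpansive (T : ellTwo → ellTwo) : Prop :=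
  ∀ a b : ellTwo, ‖T a - T b‖ ^ 2 + ‖(a - T a) - (b - T b)‖ ^ 2 ≤ ‖a - b‖ ^ 2

lemma norm_stdVec (n : ℕ) : ‖stdVec n‖ = 1 := by
  have := lp.norm_single (p := 2) (E := fun _ : ℕ => ℝ) (by norm_num) n (1 : ℝ)
  simpa [stdVec] using this

lemma inner_stdVec (n : ℕ) (w : ellTwo) : ⟪stdVec n, w⟫ = w n := by
  have := lp.inner_single_left (𝕜 := ℝ) (G := fun _ : ℕ => ℝ) n (1 : ℝ) w
  simpa [stdVec] using this

lemma coord_tendsto (w : ellTwo) : Tendsto (fun n => w n) atTop (𝓝 0) := by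
  have hs : Summable fun n => ‖w n‖ ^ (2 : ENNReal).toReal := by
    have := lp.memℓp w
    rw [memℓp_gen_iff (by norm_num)] at this
    exact this
  have h0 : Tendsto (fun n => ‖w n‖ ^ (2 : ENNReal).toReal) atTop (𝓝 0) :=
    hs.tendsto_atTop_zero
  have h1 : Tendsto (fun n => ‖w n‖) atTop (𝓝 0) := by
    have : Tendsto (fun n => Real.sqrt (‖w n‖ ^ (2 : ENNReal).toReal)) atTop (𝓝 (Real.sqrt 0)) :=
      (Real.continuous_sqrt.continuousAt).tendsto.comp h0
    have he : ∀ n : ℕ, Real.sqrt (‖w n‖ ^ (2 : ENNReal).toReal) = ‖w n‖ := by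
      intro n
      rw [show ((2:ENNReal).toReal) = (((2:ℕ):ℝ)) by simp, Real.rpow_natCast,
        Real.sqrt_sq_eq_abs, abs_norm]
    rw [Real.sqrt_zero] at this
    exact this.congr he
  exact tendsto_zero_iff_norm_tendsto_zero.2 (by simpa using h1)

lemma norm_ballProj_le (x : ellTwo) : ‖ballProj x‖ ≤ 1 := by
  unfold ballProj
  split_ifs with h
  · exact h
  · push_neg at h
    have hx : ‖x‖ ≠ 0 := by positivity
    rw [norm_smul, norm_inv, norm_norm, inv_mul_cancel₀ hx]

lemma varineq (x y : ellTwo) (hy : ‖y‖ ≤ 1) : ⟪x - ballProj x, y - ballProj x⟫ ≤ 0 := by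
  unfold ballProj
  split_ifs with h
  · simp
  · push_neg at h
    have hx0 : (0:ℝ) < ‖x‖ := lt_trans one_pos h
    have h1 : x - ‖x‖⁻¹ • x = (1 - ‖x‖⁻¹) • x := by
      rw [sub_smul, one_smul]
    rw [h1, real_inner_smul_left, inner_sub_right, real_inner_smul_right,
      real_inner_self_eq_norm_sq]
    have h2 : ⟪x, y⟫ - ‖x‖⁻¹ * ‖x‖ ^ 2 ≤ 0 := by
      have hb : ⟪x, y⟫ ≤ ‖x‖ * ‖y‖ := real_inner_le_norm x y
      have : ‖x‖⁻¹ * ‖x‖ ^ 2 = ‖x‖ := by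
        field_simp
      rw [this]
      nlinarith
    have h3 : (0:ℝ) ≤ 1 - ‖x‖⁻¹ := by
      have : ‖x‖⁻¹ < 1 := by
        rw [inv_lt_one_iff₀]; right; exact h
      linarith
    exact mul_nonpos_of_nonneg_of_nonpos h3 h2

lemma ballProj_firm : ∀ a b : ellTwo,
    ‖ballProj a - ballProj b‖ ^ 2 + ‖(a - ballProj a) - (b - ballProj b)‖ ^ 2 ≤ ‖a - b‖ ^ 2 := by
  intro a b
  set p := ballProj a
  set q := ballProj b
  have h1 : ⟪a - p, q - p⟫ ≤ 0 := varineq a q (norm_ballProj_le b)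
  have h2 : ⟪b - q, p - q⟫ ≤ 0 := varineq b p (norm_ballProj_le a)
  have hdec : a - b = ((a - p) - (b - q)) + (p - q) := by abel
  have hexp : ‖a - b‖ ^ 2 = ‖(a - p) - (b - q)‖ ^ 2
      + 2 * ⟪(a - p) - (b - q), p - q⟫ + ‖p - q‖ ^ 2 := by
    rw [hdec, @norm_add_sq_real]
  have hcross : 0 ≤ ⟪(a - p) - (b - q), p - q⟫ := by
    rw [inner_sub_left]
    have : ⟪a - p, p - q⟫ = - ⟪a - p, q - p⟫ := by
      rw [← inner_neg_right]; congr 1; abel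
    rw [this]
    linarith
  nlinarith [hexp, hcross]

lemma sqrt_two_inv_ne_one : (Real.sqrt 2)⁻¹ ≠ 1 := by
  have h : (1:ℝ) < Real.sqrt 2 := by
    nlinarith [Real.sq_sqrt (by norm_num : (2:ℝ) ≥ 0), Real.sqrt_nonneg 2]
  have : (Real.sqrt 2)⁻¹ < 1 := by
    rw [inv_lt_one_iff₀]; right; exact h
  linarith

theorem fully_weak_demiclosedness_fails
    (z : ℕ → ellTwo) (hz : ∀ n, z n = stdVec 0 + stdVec n)
    (T : ellTwo → ellTwo) (hT : T = fun x => x - ballProj x) :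
    FirmlyNonexpansive T ∧
    (∀ w : ellTwo, Tendsto (fun n => ⟪z n, w⟫) atTop (𝓝 ⟪stdVec 0, w⟫)) ∧
    (∀ n, z n - T (z n) = ballProj (z n)) ∧
    (∀ w : ellTwo, Tendsto (fun n => ⟪z n - T (z n), w⟫) atTop
      (𝓝 ⟪(Real.sqrt 2)⁻¹ • stdVec 0, w⟫)) ∧
    stdVec 0 - T (stdVec 0) = stdVec 0 ∧
    ballProj (stdVec 0) = stdVec 0 ∧
    stdVec 0 ≠ (Real.sqrt 2)⁻¹ • stdVec 0 ∧
    ¬ (∀ T' : ellTwo → ellTwo, FirmlyNonexpansive T' →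
        ∀ (zn : ℕ → ellTwo) (zl x : ellTwo),
        (∀ w : ellTwo, Tendsto (fun n => ⟪zn n, w⟫) atTop (𝓝 ⟪zl, w⟫)) →
        (∀ w : ellTwo,
          Tendsto (fun n => ⟪zn n - T' (zn n), w⟫) atTop (𝓝 ⟪x, w⟫)) →
        zl - T' zl = x) := by
  have hfirm : FirmlyNonexpansive T := by
    intro a b
    have := ballProj_firm a b
    subst hT
    simp only [sub_sub_cancel]
    linarith
  have hweak : ∀ w : ellTwo, Tendsto (fun n => ⟪z n, w⟫) atTop (𝓝 ⟪stdVec 0, w⟫) := by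
    intro w
    have : (fun n => ⟪z n, w⟫) = fun n => w 0 + w n := by
      funext n
      rw [hz n, inner_add_left, inner_stdVec, inner_stdVec]
    rw [this, inner_stdVec]
    simpa using tendsto_const_nhds.add (coord_tendsto w)
  have hzt : ∀ n, z n - T (z n) = ballProj (z n) := by
    intro n; rw [hT]; simp
  -- norm of z n for n ≥ 1
  have hnorm : ∀ n : ℕ, n ≠ 0 → ‖z n‖ = Real.sqrt 2 := by
    intro n hn
    have horth : ⟪stdVec 0, stdVec n⟫ = 0 := by
      rw [inner_stdVec, stdVec, lp.single_apply_ne (E := fun _ : ℕ => ℝ) 2 n (1:ℝ) (Ne.symm hn)]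
    have hsq : ‖z n‖ ^ 2 = 2 := by
      rw [hz n, @norm_add_sq_real, horth, norm_stdVec, norm_stdVec]; ring
    have : ‖z n‖ = Real.sqrt (‖z n‖ ^ 2) := by
      rw [Real.sqrt_sq (norm_nonneg _)]
    rw [this, hsq]
  have hsqrt2_gt : (1:ℝ) < Real.sqrt 2 := by
    nlinarith [Real.sq_sqrt (by norm_num : (2:ℝ) ≥ 0), Real.sqrt_nonneg 2]
  have hweak2 : ∀ w : ellTwo, Tendsto (fun n => ⟪z n - T (z n), w⟫) atTop
      (𝓝 ⟪(Real.sqrt 2)⁻¹ • stdVec 0, w⟫) := by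
    intro w
    have hev : ∀ᶠ n in atTop, ⟪z n - T (z n), w⟫
        = (Real.sqrt 2)⁻¹ * (w 0 + w n) := by
      filter_upwards [eventually_ne_atTop 0] with n hn
      rw [hzt n]
      unfold ballProj
      rw [if_neg (by rw [hnorm n hn]; linarith), hnorm n hn, real_inner_smul_left,
        hz n, inner_add_left, inner_stdVec, inner_stdVec]
    have hlim : Tendsto (fun n => (Real.sqrt 2)⁻¹ * (w 0 + w n)) atTop
        (𝓝 ((Real.sqrt 2)⁻¹ * (w 0 + 0))) :=
      tendsto_const_nhds.mul (tendsto_const_nhds.add (coord_tendsto w))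
    have : ⟪(Real.sqrt 2)⁻¹ • stdVec 0, w⟫ = (Real.sqrt 2)⁻¹ * (w 0 + 0) := by
      rw [real_inner_smul_left, inner_stdVec, add_zero]
    rw [this]
    exact hlim.congr' (hev.mono fun n h => h.symm)
  have hbp0 : ballProj (stdVec 0) = stdVec 0 := by
    unfold ballProj
    rw [if_pos (by rw [norm_stdVec])]
  have hfix : stdVec 0 - T (stdVec 0) = stdVec 0 := by
    rw [hT]; simpa using hbp0
  have hne : stdVec 0 ≠ (Real.sqrt 2)⁻¹ • stdVec 0 := by
    intro h
    have := congr_arg norm h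
    rw [norm_smul, norm_stdVec, mul_one, Real.norm_eq_abs,
      abs_of_nonneg (by positivity)] at this
    exact sqrt_two_inv_ne_one this.symm
  refine ⟨hfirm, hweak, hzt, hweak2, hfix, hbp0, hne, ?_⟩
  intro hcl
  have := hcl T hfirm z (stdVec 0) ((Real.sqrt 2)⁻¹ • stdVec 0) hweak hweak2
  rw [hfix] at this
  exact hne this
end
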